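/- The graph A(q) is connected and has diameter exactly 3. -/

import Mathlib

open Matrix

noncomputable section

abbrev F (n : ℕ) : Type := GaloisField 2 (2 * n + 1)

def om (n : ℕ) : ℕ := 2 ^ (n + 1)

def ff (n : ℕ) (x y : F n) : F n := x ^ (om n + 2) + x * y + y ^ om n

def Mmat (n : ℕ) (r a b : F n) : Matrix (Fin 4) (Fin 4) (F n) :=
  !![1, ff n a b, a, b;
     0, r ^ (om n + 2), 0, 0;
     0, (a ^ (om n + 1) + b) * r, r, a ^ om n * r;
     0, a * r ^ (om n + 1), 0, r ^ (om n + 1)]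

/-- The four spanning vectors of the polar line `π[x]`. -/
def polarGens (n : ℕ) (x : Fin 4 → F n) : Set (Fin 4 → F n) :=
  {![0, (x 0 * x 1 + x 2 * x 3) ^ 2 ^ n, x 0 ^ om n, x 2 ^ om n],
   ![(x 0 * x 1 + x 2 * x 3) ^ 2 ^ n, 0, x 3 ^ om n, x 1 ^ om n],
   ![x 0 ^ om n, x 3 ^ om n, 0, (x 0 * x 1 + x 2 * x 3) ^ 2 ^ n],
   ![x 2 ^ om n, x 1 ^ om n, (x 0 * x 1 + x 2 * x 3) ^ 2 ^ n, 0]}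

/-- The polar line `π[x]`, as a subspace of `F⁴`. -/
def polarSpan (n : ℕ) (x : Fin 4 → F n) : Submodule (F n) (Fin 4 → F n) :=
  Submodule.span (F n) (polarGens n x)

/-- The point set of `PG(3,q)`. -/
abbrev PG3 (n : ℕ) : Type := Projectivization (F n) (Fin 4 → F n)

/-- The graph `A(q)`: projective points of `PG(3,q)`, with `[x]` adjacent to `[y]`
iff `[x] ≠ [y]` and `y ∈ π[x]` (equivalently, `x ∈ π[y]`, the relation being
symmetric).  Membership `y ∈ π[x]` does not depend on the choice of
representatives, so it is tested on the canonical representatives. -/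
def Aq (n : ℕ) : SimpleGraph (PG3 n) where
  Adj P Q := P ≠ Q ∧ Q.rep ∈ polarSpan n P.rep ∧ P.rep ∈ polarSpan n Q.rep
  symm := ⟨fun _ _ h => ⟨h.1.symm, h.2.2, h.2.1⟩⟩
  loopless := ⟨fun _ h => h.1 rfl⟩

/-- A vector with a coordinate equal to `1` is nonzero. -/
lemma vne {n : ℕ} (v : Fin 4 → F n) (i : Fin 4) (h : v i = 1) : v ≠ 0 := by
  intro h0; rw [h0] at h; simp at h

/-! ### Auxiliary material for the proof -/

namespace AqPf

noncomputable instance (n : ℕ) : Fintype (F n) := Fintype.ofFinite _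

variable {n : ℕ}

lemma two_eq_zero : (2 : F n) = 0 := by
  have := CharP.cast_eq_zero (F n) 2
  exact_mod_cast this

lemma pow_card (a : F n) : a ^ 2 ^ (2 * n + 1) = a := by
  have h := FiniteField.pow_card (K := F n) a
  have hc : Fintype.card (F n) = 2 ^ (2 * n + 1) := by
    have := GaloisField.card 2 (2 * n + 1) (by omega)
    simpa [Nat.card_eq_fintype_card] using this
  rwa [hc] at h

lemma frob_add (a b : F n) : (a + b) ^ 2 ^ n = a ^ 2 ^ n + b ^ 2 ^ n := add_pow_char_pow ..

lemma frob_add_om (a b : F n) : (a + b) ^ om n = a ^ om n + b ^ om n := by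
  rw [om]; exact add_pow_char_pow ..

lemma pow_om (a : F n) : a ^ om n = (a ^ 2 ^ n) ^ 2 := by
  rw [om, pow_succ, pow_mul]

lemma hQ (a : F n) : (a ^ 2 ^ n) ^ om n = a := by
  rw [om, ← pow_mul, ← pow_add, show n + (n + 1) = 2 * n + 1 by omega]
  exact pow_card a

lemma hQ3 (a : F n) : (a ^ om n) ^ om n = a ^ 2 := by
  rw [om, ← pow_mul, ← pow_add, show (n+1) + (n+1) = (2*n+1) + 1 by omega, pow_succ, pow_mul]
  rw [pow_card]

lemma hQsq (a : F n) : ((a ^ 2) ^ 2 ^ n) ^ 2 ^ n = a := by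
  rw [← pow_mul, ← pow_mul,
    show 2 * (2 ^ n * 2 ^ n) = 2 ^ (2 * n + 1) by
      rw [← pow_add, ← pow_succ']; congr 1; omega]
  exact pow_card a

lemma zpn : (0 : F n) ^ 2 ^ n = 0 := zero_pow (by positivity)

lemma zpo : (0 : F n) ^ om n = 0 := zero_pow (by rw [om]; positivity)

/-- The four linear equations cutting out the polar line `π[x]`. -/
def ee (n : ℕ) (x y : Fin 4 → F n) : Fin 4 → F n :=
  ![(x 0 * x 1 + x 2 * x 3) ^ 2 ^ n * y 1 + x 1 ^ om n * y 2 + x 3 ^ om n * y 3,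
    (x 0 * x 1 + x 2 * x 3) ^ 2 ^ n * y 0 + x 2 ^ om n * y 2 + x 0 ^ om n * y 3,
    x 1 ^ om n * y 0 + x 2 ^ om n * y 1 + (x 0 * x 1 + x 2 * x 3) ^ 2 ^ n * y 3,
    x 3 ^ om n * y 0 + x 0 ^ om n * y 1 + (x 0 * x 1 + x 2 * x 3) ^ 2 ^ n * y 2]

/-- `ee n x` as a linear map in the second argument. -/
def eeL (n : ℕ) (x : Fin 4 → F n) : (Fin 4 → F n) →ₗ[F n] (Fin 4 → F n) where
  toFun := ee n x
  map_add' := by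
    intro y z; funext i; fin_cases i <;> simp [ee] <;> ring
  map_smul' := by
    intro t y; funext i; fin_cases i <;> simp [ee] <;> ring

end AqPf
namespace AqPf
variable {n : ℕ}

lemma ee_gens (x : Fin 4 → F n) {g : Fin 4 → F n} (hg : g ∈ polarGens n x) :
    ee n x g = 0 := by
  have h2 : (2 : F n) = 0 := two_eq_zero
  have hc : ((x 0 * x 1 + x 2 * x 3) : F n) ^ 2 ^ n
      = x 0 ^ 2 ^ n * x 1 ^ 2 ^ n + x 2 ^ 2 ^ n * x 3 ^ 2 ^ n := by
    rw [frob_add, mul_pow, mul_pow]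
  simp only [polarGens, Set.mem_insert_iff, Set.mem_singleton_iff] at hg
  rcases hg with rfl | rfl | rfl | rfl <;> funext i <;> fin_cases i <;>
      simp only [ee, Fin.isValue, Fin.reduceFinMk, Fin.zero_eta, Fin.mk_one,
        Matrix.cons_val_zero, Matrix.cons_val_one, Matrix.head_cons,
        Matrix.cons_val_two, Matrix.tail_cons, Matrix.cons_val_three, Pi.zero_apply] <;>
    simp only [pow_om, hc]
  · linear_combination ((x 0^2^n)^2*(x 1^2^n)^2 + x 0^2^n*x 1^2^n*x 2^2^n*x 3^2^n + (x 2^2^n)^2*(x 3^2^n)^2) * h2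
  · linear_combination ((x 0^2^n)^2*(x 2^2^n)^2) * h2
  · linear_combination (x 0^2^n*x 1^2^n*(x 2^2^n)^2 + (x 2^2^n)^3*x 3^2^n) * h2
  · linear_combination ((x 0^2^n)^3*x 1^2^n + (x 0^2^n)^2*x 2^2^n*x 3^2^n) * h2
  · linear_combination ((x 1^2^n)^2*(x 3^2^n)^2) * h2
  · linear_combination ((x 0^2^n)^2*(x 1^2^n)^2 + x 0^2^n*x 1^2^n*x 2^2^n*x 3^2^n + (x 2^2^n)^2*(x 3^2^n)^2) * h2
  · linear_combination (x 0^2^n*(x 1^2^n)^3 + (x 1^2^n)^2*x 2^2^n*x 3^2^n) * h2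
  · linear_combination (x 0^2^n*x 1^2^n*(x 3^2^n)^2 + x 2^2^n*(x 3^2^n)^3) * h2
  · linear_combination (x 0^2^n*x 1^2^n*(x 3^2^n)^2 + x 2^2^n*(x 3^2^n)^3) * h2
  · linear_combination ((x 0^2^n)^3*x 1^2^n + (x 0^2^n)^2*x 2^2^n*x 3^2^n) * h2
  · linear_combination ((x 0^2^n)^2*(x 1^2^n)^2 + x 0^2^n*x 1^2^n*x 2^2^n*x 3^2^n + (x 2^2^n)^2*(x 3^2^n)^2) * h2
  · linear_combination ((x 0^2^n)^2*(x 3^2^n)^2) * h2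
  · linear_combination (x 0^2^n*(x 1^2^n)^3 + (x 1^2^n)^2*x 2^2^n*x 3^2^n) * h2
  · linear_combination (x 0^2^n*x 1^2^n*(x 2^2^n)^2 + (x 2^2^n)^3*x 3^2^n) * h2
  · linear_combination ((x 1^2^n)^2*(x 2^2^n)^2) * h2
  · linear_combination ((x 0^2^n)^2*(x 1^2^n)^2 + x 0^2^n*x 1^2^n*x 2^2^n*x 3^2^n + (x 2^2^n)^2*(x 3^2^n)^2) * h2

lemma ee_of_mem {x y : Fin 4 → F n} (h : y ∈ polarSpan n x) : ee n x y = 0 := by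
  have hle : polarSpan n x ≤ LinearMap.ker (eeL n x) :=
    Submodule.span_le.2 fun g hg => LinearMap.mem_ker.2 (ee_gens x hg)
  exact hle h

end AqPf
namespace AqPf
variable {n : ℕ}

lemma om_ne : om n ≠ 0 := by rw [om]; positivity

lemma ee_symm {x y : Fin 4 → F n} (h : ee n x y = 0) : ee n y x = 0 := by
  have h2 : (2 : F n) = 0 := two_eq_zero
  have hE0 := congrFun h 0; have hE1 := congrFun h 1
  have hE2 := congrFun h 2; have hE3 := congrFun h 3
  simp only [ee, Matrix.cons_val_zero, Matrix.cons_val_one, Matrix.head_cons, Matrix.cons_val_two,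
    Matrix.tail_cons, Matrix.cons_val_three, Pi.zero_apply] at hE0 hE1 hE2 hE3
  funext i; fin_cases i <;>
    simp only [ee, Fin.isValue, Fin.reduceFinMk, Fin.zero_eta, Fin.mk_one,
      Matrix.cons_val_zero, Matrix.cons_val_one, Matrix.head_cons,
      Matrix.cons_val_two, Matrix.tail_cons, Matrix.cons_val_three, Pi.zero_apply]
  · refine (pow_eq_zero_iff (n := om n) om_ne).1 ?_
    rw [frob_add_om, frob_add_om, mul_pow, mul_pow, mul_pow, hQ, hQ3, hQ3]
    linear_combination y 1 * hE2 + y 3 * hE0 - (x 0*x 1+x 2*x 3)^2^n * y 1 * y 3 * h2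
  · refine (pow_eq_zero_iff (n := om n) om_ne).1 ?_
    rw [frob_add_om, frob_add_om, mul_pow, mul_pow, mul_pow, hQ, hQ3, hQ3]
    linear_combination y 0 * hE3 + y 2 * hE1 - (x 0*x 1+x 2*x 3)^2^n * y 0 * y 2 * h2
  · refine (pow_eq_zero_iff (n := om n) om_ne).1 ?_
    rw [frob_add_om, frob_add_om, mul_pow, mul_pow, mul_pow, hQ3, hQ3, hQ]
    linear_combination y 1 * hE3 + y 2 * hE0 - (x 0*x 1+x 2*x 3)^2^n * y 1 * y 2 * h2
  · refine (pow_eq_zero_iff (n := om n) om_ne).1 ?_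
    rw [frob_add_om, frob_add_om, mul_pow, mul_pow, mul_pow, hQ3, hQ3, hQ]
    linear_combination y 3 * hE1 + y 0 * hE2 - (x 0*x 1+x 2*x 3)^2^n * y 0 * y 3 * h2

lemma ee_smul_left (t : F n) (x y : Fin 4 → F n) (i : Fin 4) :
    ee n (t • x) y i = t ^ om n * ee n x y i := by
  have hsc : ((t * x 0) * (t * x 1) + (t * x 2) * (t * x 3) : F n) ^ 2 ^ n
      = t ^ om n * (x 0 * x 1 + x 2 * x 3) ^ 2 ^ n := by
    rw [show ((t * x 0) * (t * x 1) + (t * x 2) * (t * x 3) : F n)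
          = t ^ 2 * (x 0 * x 1 + x 2 * x 3) by ring,
      mul_pow, ← pow_mul, show 2 * 2 ^ n = om n by rw [om, pow_succ']]
  fin_cases i <;>
    simp only [ee, Pi.smul_apply, smul_eq_mul, Fin.isValue, Fin.reduceFinMk, Fin.zero_eta,
      Fin.mk_one, Matrix.cons_val_zero, Matrix.cons_val_one, Matrix.head_cons,
      Matrix.cons_val_two, Matrix.tail_cons, Matrix.cons_val_three] <;>
    rw [hsc] <;> simp only [mul_pow] <;> ring

lemma ee_smul_left_zero {t : F n} (ht : t ≠ 0) {x y : Fin 4 → F n} (h : ee n x y = 0) :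
    ee n (t • x) y = 0 := by
  funext i
  rw [ee_smul_left]
  have := congrFun h i
  simp only [Pi.zero_apply] at this ⊢
  rw [this, mul_zero]

lemma ee_smul_left_iff {t : F n} (ht : t ≠ 0) (x y : Fin 4 → F n) :
    ee n (t • x) y = 0 ↔ ee n x y = 0 := by
  refine ⟨fun h => ?_, fun h => ee_smul_left_zero ht h⟩
  have := ee_smul_left_zero (inv_ne_zero ht) h
  rwa [smul_smul, inv_mul_cancel₀ ht, one_smul] at this

lemma ee_smul_right (t : F n) (x y : Fin 4 → F n) (i : Fin 4) :
    ee n x (t • y) i = t * ee n x y i := by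
  fin_cases i <;> simp [ee] <;> ring

lemma ee_smul_right_zero {t : F n} {x y : Fin 4 → F n} (h : ee n x y = 0) :
    ee n x (t • y) = 0 := by
  funext i
  rw [ee_smul_right]
  have := congrFun h i
  simp only [Pi.zero_apply] at this ⊢
  rw [this, mul_zero]

lemma ee_smul_right_iff {t : F n} (ht : t ≠ 0) (x y : Fin 4 → F n) :
    ee n x (t • y) = 0 ↔ ee n x y = 0 := by
  refine ⟨fun h => ?_, fun h => ee_smul_right_zero h⟩
  have := ee_smul_right_zero (t := t⁻¹) h
  rwa [smul_smul, inv_mul_cancel₀ ht, one_smul] at this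

lemma mem_polarSpan_of_ee {x y : Fin 4 → F n} (hx : x ≠ 0) (h : ee n x y = 0) :
    y ∈ polarSpan n x := by
  have h2 : (2 : F n) = 0 := two_eq_zero
  have hE0 := congrFun h 0; have hE1 := congrFun h 1
  have hE2 := congrFun h 2; have hE3 := congrFun h 3
  simp only [ee, Matrix.cons_val_zero, Matrix.cons_val_one, Matrix.head_cons, Matrix.cons_val_two,
    Matrix.tail_cons, Matrix.cons_val_three, Pi.zero_apply] at hE0 hE1 hE2 hE3
  have hg1 : (![0, (x 0 * x 1 + x 2 * x 3) ^ 2 ^ n, x 0 ^ om n, x 2 ^ om n] : Fin 4 → F n)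
      ∈ polarSpan n x := Submodule.subset_span (by simp [polarGens])
  have hg2 : (![(x 0 * x 1 + x 2 * x 3) ^ 2 ^ n, 0, x 3 ^ om n, x 1 ^ om n] : Fin 4 → F n)
      ∈ polarSpan n x := Submodule.subset_span (by simp [polarGens])
  have hg3 : (![x 0 ^ om n, x 3 ^ om n, 0, (x 0 * x 1 + x 2 * x 3) ^ 2 ^ n] : Fin 4 → F n)
      ∈ polarSpan n x := Submodule.subset_span (by simp [polarGens])
  have hg4 : (![x 2 ^ om n, x 1 ^ om n, (x 0 * x 1 + x 2 * x 3) ^ 2 ^ n, 0] : Fin 4 → F n)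
      ∈ polarSpan n x := Submodule.subset_span (by simp [polarGens])
  by_cases hc : (x 0 * x 1 + x 2 * x 3 : F n) = 0
  · -- degenerate conic case
    have hCz : ((x 0 * x 1 + x 2 * x 3 : F n)) ^ 2 ^ n = 0 := by rw [hc]; exact zpn
    rw [hCz] at hE0 hE1 hE2 hE3
    simp only [zero_mul, zero_add, add_zero] at hE0 hE1 hE2 hE3
    have hX : ∃ i, x i ≠ 0 := by
      by_contra hall; push_neg at hall; exact hx (funext fun i => hall i)
    rcases hX with ⟨i, hxi⟩
    fin_cases i
    · have hXo : (x 0 : F n) ^ om n ≠ 0 := pow_ne_zero _ hxi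
      rw [← Submodule.smul_mem_iff (polarSpan n x) hXo]
      have hrep : (x 0 ^ om n : F n) • y
          = y 0 • ![x 0 ^ om n, x 3 ^ om n, 0, (x 0 * x 1 + x 2 * x 3) ^ 2 ^ n]
          + y 2 • ![0, (x 0 * x 1 + x 2 * x 3) ^ 2 ^ n, x 0 ^ om n, x 2 ^ om n] := by
        funext j; fin_cases j <;>
          simp only [Pi.add_apply, Pi.smul_apply, smul_eq_mul, Fin.isValue, Fin.reduceFinMk,
            Fin.zero_eta, Fin.mk_one, Matrix.cons_val_zero, Matrix.cons_val_one, Matrix.head_cons,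
            Matrix.cons_val_two, Matrix.tail_cons, Matrix.cons_val_three, hCz, mul_zero, add_zero,
            zero_add, zero_mul]
        · ring
        · linear_combination hE3 - x 3 ^ om n * y 0 * h2
        · ring
        · linear_combination hE1 - x 2 ^ om n * y 2 * h2
      rw [hrep]
      exact Submodule.add_mem _ (Submodule.smul_mem _ _ hg3) (Submodule.smul_mem _ _ hg1)
    · have hXo : (x 1 : F n) ^ om n ≠ 0 := pow_ne_zero _ hxi
      rw [← Submodule.smul_mem_iff (polarSpan n x) hXo]
      have hrep : (x 1 ^ om n : F n) • y
          = y 1 • ![x 2 ^ om n, x 1 ^ om n, (x 0 * x 1 + x 2 * x 3) ^ 2 ^ n, 0]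
          + y 3 • ![(x 0 * x 1 + x 2 * x 3) ^ 2 ^ n, 0, x 3 ^ om n, x 1 ^ om n] := by
        funext j; fin_cases j <;>
          simp only [Pi.add_apply, Pi.smul_apply, smul_eq_mul, Fin.isValue, Fin.reduceFinMk,
            Fin.zero_eta, Fin.mk_one, Matrix.cons_val_zero, Matrix.cons_val_one, Matrix.head_cons,
            Matrix.cons_val_two, Matrix.tail_cons, Matrix.cons_val_three, hCz, mul_zero, add_zero,
            zero_add, zero_mul]
        · linear_combination hE2 - x 2 ^ om n * y 1 * h2
        · ring
        · linear_combination hE0 - x 3 ^ om n * y 3 * h2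
        · ring
      rw [hrep]
      exact Submodule.add_mem _ (Submodule.smul_mem _ _ hg4) (Submodule.smul_mem _ _ hg2)
    · have hXo : (x 2 : F n) ^ om n ≠ 0 := pow_ne_zero _ hxi
      rw [← Submodule.smul_mem_iff (polarSpan n x) hXo]
      have hrep : (x 2 ^ om n : F n) • y
          = y 0 • ![x 2 ^ om n, x 1 ^ om n, (x 0 * x 1 + x 2 * x 3) ^ 2 ^ n, 0]
          + y 3 • ![0, (x 0 * x 1 + x 2 * x 3) ^ 2 ^ n, x 0 ^ om n, x 2 ^ om n] := by
        funext j; fin_cases j <;>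
          simp only [Pi.add_apply, Pi.smul_apply, smul_eq_mul, Fin.isValue, Fin.reduceFinMk,
            Fin.zero_eta, Fin.mk_one, Matrix.cons_val_zero, Matrix.cons_val_one, Matrix.head_cons,
            Matrix.cons_val_two, Matrix.tail_cons, Matrix.cons_val_three, hCz, mul_zero, add_zero,
            zero_add, zero_mul]
        · ring
        · linear_combination hE2 - x 1 ^ om n * y 0 * h2
        · linear_combination hE1 - x 0 ^ om n * y 3 * h2
        · ring
      rw [hrep]
      exact Submodule.add_mem _ (Submodule.smul_mem _ _ hg4) (Submodule.smul_mem _ _ hg1)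
    · have hXo : (x 3 : F n) ^ om n ≠ 0 := pow_ne_zero _ hxi
      rw [← Submodule.smul_mem_iff (polarSpan n x) hXo]
      have hrep : (x 3 ^ om n : F n) • y
          = y 1 • ![x 0 ^ om n, x 3 ^ om n, 0, (x 0 * x 1 + x 2 * x 3) ^ 2 ^ n]
          + y 2 • ![(x 0 * x 1 + x 2 * x 3) ^ 2 ^ n, 0, x 3 ^ om n, x 1 ^ om n] := by
        funext j; fin_cases j <;>
          simp only [Pi.add_apply, Pi.smul_apply, smul_eq_mul, Fin.isValue, Fin.reduceFinMk,
            Fin.zero_eta, Fin.mk_one, Matrix.cons_val_zero, Matrix.cons_val_one, Matrix.head_cons,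
            Matrix.cons_val_two, Matrix.tail_cons, Matrix.cons_val_three, hCz, mul_zero, add_zero,
            zero_add, zero_mul]
        · linear_combination hE3 - x 0 ^ om n * y 1 * h2
        · ring
        · ring
        · linear_combination hE0 - x 1 ^ om n * y 2 * h2
      rw [hrep]
      exact Submodule.add_mem _ (Submodule.smul_mem _ _ hg3) (Submodule.smul_mem _ _ hg2)
  · have hC : ((x 0 * x 1 + x 2 * x 3 : F n)) ^ 2 ^ n ≠ 0 := pow_ne_zero _ hc
    rw [← Submodule.smul_mem_iff (polarSpan n x) hC]
    have hrep : ((x 0 * x 1 + x 2 * x 3) ^ 2 ^ n : F n) • y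
        = y 1 • ![0, (x 0 * x 1 + x 2 * x 3) ^ 2 ^ n, x 0 ^ om n, x 2 ^ om n]
        + y 0 • ![(x 0 * x 1 + x 2 * x 3) ^ 2 ^ n, 0, x 3 ^ om n, x 1 ^ om n] := by
      funext j; fin_cases j <;>
        simp only [Pi.add_apply, Pi.smul_apply, smul_eq_mul, Fin.isValue, Fin.reduceFinMk,
          Fin.zero_eta, Fin.mk_one, Matrix.cons_val_zero, Matrix.cons_val_one, Matrix.head_cons,
          Matrix.cons_val_two, Matrix.tail_cons, Matrix.cons_val_three, mul_zero, add_zero,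
          zero_add, zero_mul]
      · ring
      · ring
      · linear_combination hE3 - (x 0 ^ om n * y 1 + x 3 ^ om n * y 0) * h2
      · linear_combination hE2 - (x 2 ^ om n * y 1 + x 1 ^ om n * y 0) * h2
    rw [hrep]
    exact Submodule.add_mem _ (Submodule.smul_mem _ _ hg1) (Submodule.smul_mem _ _ hg2)

end AqPf
namespace AqPf
variable {n : ℕ}

/-- The common point of the polar lines `π[x]` and `π[w]`, for `B(x,w) = 0`:
its polar line is the line spanned by `x` and `w`. -/
def zf (n : ℕ) (x w : Fin 4 → F n) : Fin 4 → F n :=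
  ![(x 0 * w 2 + x 2 * w 0) ^ 2 ^ n, (x 1 * w 3 + x 3 * w 1) ^ 2 ^ n,
    (x 0 * w 3 + x 3 * w 0) ^ 2 ^ n, (x 1 * w 2 + x 2 * w 1) ^ 2 ^ n]

lemma zf_comm (x w : Fin 4 → F n) : zf n x w = zf n w x := by
  funext i; fin_cases i <;> simp only [zf, Fin.isValue, Fin.reduceFinMk, Fin.zero_eta, Fin.mk_one,
    Matrix.cons_val_zero, Matrix.cons_val_one, Matrix.head_cons,
    Matrix.cons_val_two, Matrix.tail_cons, Matrix.cons_val_three] <;> (congr 1; ring)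

lemma ee_zf {x w : Fin 4 → F n}
    (hB : x 0 * w 1 + x 1 * w 0 + x 2 * w 3 + x 3 * w 2 = 0) :
    ee n (zf n x w) x = 0 := by
  have h2 : (2 : F n) = 0 := two_eq_zero
  have hcz : ((zf n x w 0 * zf n x w 1 + zf n x w 2 * zf n x w 3 : F n)) ^ 2 ^ n
      = x 0 * w 1 + x 1 * w 0 := by
    simp only [zf, Matrix.cons_val_zero, Matrix.cons_val_one, Matrix.head_cons,
      Matrix.cons_val_two, Matrix.tail_cons, Matrix.cons_val_three]
    rw [← mul_pow, ← mul_pow, ← frob_add]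
    rw [show ((x 0 * w 2 + x 2 * w 0) * (x 1 * w 3 + x 3 * w 1)
          + (x 0 * w 3 + x 3 * w 0) * (x 1 * w 2 + x 2 * w 1) : F n)
        = (x 0 * w 1 + x 1 * w 0) ^ 2 by
      linear_combination (x 0 * w 1 + x 1 * w 0) * hB
        + (- (w 0^2*x 1^2) - 2*(w 0*w 1*x 0*x 1) + w 0*w 1*x 2*x 3 - w 1^2*x 0^2
           + w 2*w 3*x 0*x 1) * h2]
    exact hQsq _
  have hzo : ∀ a : F n, (a ^ 2 ^ n) ^ om n = a := hQ
  funext i; fin_cases i <;>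
    simp only [ee, zf, Fin.isValue, Fin.reduceFinMk, Fin.zero_eta, Fin.mk_one,
      Matrix.cons_val_zero, Matrix.cons_val_one, Matrix.head_cons,
      Matrix.cons_val_two, Matrix.tail_cons, Matrix.cons_val_three, Pi.zero_apply]
  · rw [show ((x 0 * w 2 + x 2 * w 0) ^ 2 ^ n * (x 1 * w 3 + x 3 * w 1) ^ 2 ^ n
        + (x 0 * w 3 + x 3 * w 0) ^ 2 ^ n * (x 1 * w 2 + x 2 * w 1) ^ 2 ^ n : F n) ^ 2 ^ n
        = x 0 * w 1 + x 1 * w 0 from by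
      simpa only [zf, Matrix.cons_val_zero, Matrix.cons_val_one, Matrix.head_cons,
        Matrix.cons_val_two, Matrix.tail_cons, Matrix.cons_val_three] using hcz,
      hzo, hzo]
    linear_combination x 1 * hB + w 1 * x 2 * x 3 * h2
  · rw [show ((x 0 * w 2 + x 2 * w 0) ^ 2 ^ n * (x 1 * w 3 + x 3 * w 1) ^ 2 ^ n
        + (x 0 * w 3 + x 3 * w 0) ^ 2 ^ n * (x 1 * w 2 + x 2 * w 1) ^ 2 ^ n : F n) ^ 2 ^ n
        = x 0 * w 1 + x 1 * w 0 from by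
      simpa only [zf, Matrix.cons_val_zero, Matrix.cons_val_one, Matrix.head_cons,
        Matrix.cons_val_two, Matrix.tail_cons, Matrix.cons_val_three] using hcz,
      hzo, hzo]
    linear_combination x 0 * hB + w 0 * x 2 * x 3 * h2
  · rw [show ((x 0 * w 2 + x 2 * w 0) ^ 2 ^ n * (x 1 * w 3 + x 3 * w 1) ^ 2 ^ n
        + (x 0 * w 3 + x 3 * w 0) ^ 2 ^ n * (x 1 * w 2 + x 2 * w 1) ^ 2 ^ n : F n) ^ 2 ^ n
        = x 0 * w 1 + x 1 * w 0 from by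
      simpa only [zf, Matrix.cons_val_zero, Matrix.cons_val_one, Matrix.head_cons,
        Matrix.cons_val_two, Matrix.tail_cons, Matrix.cons_val_three] using hcz,
      hzo, hzo]
    linear_combination (w 0 * x 1 * x 3 + w 1 * x 0 * x 3 + w 3 * x 0 * x 1) * h2
  · rw [show ((x 0 * w 2 + x 2 * w 0) ^ 2 ^ n * (x 1 * w 3 + x 3 * w 1) ^ 2 ^ n
        + (x 0 * w 3 + x 3 * w 0) ^ 2 ^ n * (x 1 * w 2 + x 2 * w 1) ^ 2 ^ n : F n) ^ 2 ^ n
        = x 0 * w 1 + x 1 * w 0 from by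
      simpa only [zf, Matrix.cons_val_zero, Matrix.cons_val_one, Matrix.head_cons,
        Matrix.cons_val_two, Matrix.tail_cons, Matrix.cons_val_three] using hcz,
      hzo, hzo]
    linear_combination (w 0 * x 1 * x 2 + w 1 * x 0 * x 2 + w 2 * x 0 * x 1) * h2

/-- If the intersection point degenerates, `w` is proportional to `x`. -/
lemma dep_of_zf_eq_zero {x w : Fin 4 → F n} (hx : x ≠ 0)
    (hB : x 0 * w 1 + x 1 * w 0 + x 2 * w 3 + x 3 * w 2 = 0)
    (hz : zf n x w = 0) : ∃ t : F n, w = t • x := by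
  have h2 : (2 : F n) = 0 := two_eq_zero
  have e2n : (2 : ℕ) ^ n ≠ 0 := by positivity
  have h02 : (x 0 * w 2 + x 2 * w 0 : F n) = 0 := by
    have := congrFun hz 0
    simp only [zf, Matrix.cons_val_zero, Pi.zero_apply] at this
    exact (pow_eq_zero_iff e2n).1 this
  have h13 : (x 1 * w 3 + x 3 * w 1 : F n) = 0 := by
    have := congrFun hz 1
    simp only [zf, Matrix.cons_val_one, Matrix.head_cons, Pi.zero_apply] at this
    exact (pow_eq_zero_iff e2n).1 this
  have h03 : (x 0 * w 3 + x 3 * w 0 : F n) = 0 := by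
    have := congrFun hz 2
    simp only [zf, Matrix.cons_val_two, Matrix.tail_cons, Matrix.head_cons, Pi.zero_apply] at this
    exact (pow_eq_zero_iff e2n).1 this
  have h12 : (x 1 * w 2 + x 2 * w 1 : F n) = 0 := by
    have := congrFun hz 3
    simp only [zf, Matrix.cons_val_three, Matrix.tail_cons, Matrix.head_cons, Pi.zero_apply]
      at this
    exact (pow_eq_zero_iff e2n).1 this
  have h01 : (x 0 * w 1 + x 1 * w 0 : F n) = 0 := by
    have hsq : (x 0 * w 1 + x 1 * w 0 : F n) ^ 2 = 0 := by
      linear_combination (x 0 * w 1 + x 1 * w 0) * hB - (x 1 * w 3 + x 3 * w 1) * h02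
        - (x 1 * w 2 + x 2 * w 1) * h03 + (w 0 * w 1 * x 2 * x 3 + w 2 * w 3 * x 0 * x 1) * h2
    exact (pow_eq_zero_iff two_ne_zero).1 hsq
  have h23 : (x 2 * w 3 + x 3 * w 2 : F n) = 0 := by linear_combination hB - h01
  have hX : ∃ i, x i ≠ 0 := by
    by_contra hall; push_neg at hall; exact hx (funext fun i => hall i)
  have dep_aux : ∀ i : Fin 4, x i ≠ 0 → (∀ j, x i * w j = w i * x j) → ∃ t : F n, w = t • x := by
    intro i hxi hall
    refine ⟨w i * (x i)⁻¹, funext fun j => ?_⟩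
    have := hall j
    simp only [Pi.smul_apply, smul_eq_mul]
    field_simp
    linear_combination this
  rcases hX with ⟨i, hxi⟩
  fin_cases i
  · refine dep_aux 0 (by simpa using hxi) fun j => ?_
    fin_cases j <;> simp only [Fin.isValue, Fin.zero_eta, Fin.mk_one, Fin.reduceFinMk]
    · ring
    · linear_combination h01 - x 1 * w 0 * h2
    · linear_combination h02 - x 2 * w 0 * h2
    · linear_combination h03 - x 3 * w 0 * h2
  · refine dep_aux 1 (by simpa using hxi) fun j => ?_
    fin_cases j <;> simp only [Fin.isValue, Fin.zero_eta, Fin.mk_one, Fin.reduceFinMk]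
    · linear_combination h01 - x 0 * w 1 * h2
    · ring
    · linear_combination h12 - x 2 * w 1 * h2
    · linear_combination h13 - x 3 * w 1 * h2
  · refine dep_aux 2 (by simpa using hxi) fun j => ?_
    fin_cases j <;> simp only [Fin.isValue, Fin.zero_eta, Fin.mk_one, Fin.reduceFinMk]
    · linear_combination h02 - x 0 * w 2 * h2
    · linear_combination h12 - x 1 * w 2 * h2
    · ring
    · linear_combination h23 - x 3 * w 2 * h2
  · refine dep_aux 3 (by simpa using hxi) fun j => ?_
    fin_cases j <;> simp only [Fin.isValue, Fin.zero_eta, Fin.mk_one, Fin.reduceFinMk]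
    · linear_combination h03 - x 0 * w 3 * h2
    · linear_combination h13 - x 1 * w 3 * h2
    · linear_combination h23 - x 2 * w 3 * h2
    · ring

end AqPf
namespace AqPf
variable {n : ℕ}

/-- The symplectic form `B(x, ·)` as a linear functional. -/
def Blin (n : ℕ) (x : Fin 4 → F n) : (Fin 4 → F n) →ₗ[F n] F n :=
  x 0 • LinearMap.proj 1 + x 1 • LinearMap.proj 0 + x 2 • LinearMap.proj 3 + x 3 • LinearMap.proj 2

lemma Blin_apply (x w : Fin 4 → F n) :
    Blin n x w = x 0 * w 1 + x 1 * w 0 + x 2 * w 3 + x 3 * w 2 := by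
  simp [Blin]

lemma finrank_ker_Blin {x : Fin 4 → F n} (hx : x ≠ 0) :
    3 ≤ Module.finrank (F n) (LinearMap.ker (Blin n x)) := by
  have hX : ∃ i, x i ≠ 0 := by
    by_contra hall; push_neg at hall; exact hx (funext fun i => hall i)
  have hsurj : Function.Surjective (Blin n x) := by
    rcases hX with ⟨i, hxi⟩
    intro a
    fin_cases i
    · exact ⟨(a / x 0) • ![0, 1, 0, 0], by
        rw [_root_.map_smul, Blin_apply]; simp; exact div_mul_cancel₀ a (by simpa using hxi)⟩
    · exact ⟨(a / x 1) • ![1, 0, 0, 0], by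
        rw [_root_.map_smul, Blin_apply]; simp; exact div_mul_cancel₀ a (by simpa using hxi)⟩
    · exact ⟨(a / x 2) • ![0, 0, 0, 1], by
        rw [_root_.map_smul, Blin_apply]; simp; exact div_mul_cancel₀ a (by simpa using hxi)⟩
    · exact ⟨(a / x 3) • ![0, 0, 1, 0], by
        rw [_root_.map_smul, Blin_apply]; simp; exact div_mul_cancel₀ a (by simpa using hxi)⟩
  have h := LinearMap.finrank_range_add_finrank_ker (Blin n x)
  rw [LinearMap.range_eq_top.2 hsurj] at h
  have h1 : Module.finrank (F n) (⊤ : Submodule (F n) (F n)) = 1 := by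
    simp [finrank_top]
  have h4 : Module.finrank (F n) (Fin 4 → F n) = 4 := by
    simp [Module.finrank_pi]
  omega

lemma two_le_finrank_span {S : Set (Fin 4 → F n)} {g g' : Fin 4 → F n}
    (hg : g ∈ S) (hg' : g' ∈ S) (i j : Fin 4)
    (h1 : g i = 0) (h2 : g j ≠ 0) (h3 : g' i ≠ 0) :
    2 ≤ Module.finrank (F n) (Submodule.span (F n) S) := by
  have hli : LinearIndependent (F n) ![g', g] := by
    rw [linearIndependent_fin2]
    constructor
    · intro h0; exact h2 (by rw [show g = ![g', g] 1 from rfl, h0]; rfl)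
    · intro a ha
      have := congrFun ha i
      simp only [Matrix.cons_val_one, Matrix.head_cons, Matrix.cons_val_zero, Pi.smul_apply,
        smul_eq_mul] at this
      rw [h1, mul_zero] at this
      exact h3 this.symm
  have hsub : Submodule.span (F n) (Set.range ![g', g]) ≤ Submodule.span (F n) S := by
    apply Submodule.span_mono
    rw [Set.range_subset_iff]
    intro k; fin_cases k <;> simpa
  have hcard := finrank_span_eq_card (R := F n) hli
  have := Submodule.finrank_mono hsub
  simp only [Fintype.card_fin] at hcard
  omega

lemma two_le_finrank_polarSpan {y : Fin 4 → F n} (hy : y ≠ 0) :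
    2 ≤ Module.finrank (F n) (polarSpan n y) := by
  have hg1 : (![0, (y 0 * y 1 + y 2 * y 3) ^ 2 ^ n, y 0 ^ om n, y 2 ^ om n] : Fin 4 → F n)
      ∈ polarGens n y := by simp [polarGens]
  have hg2 : (![(y 0 * y 1 + y 2 * y 3) ^ 2 ^ n, 0, y 3 ^ om n, y 1 ^ om n] : Fin 4 → F n)
      ∈ polarGens n y := by simp [polarGens]
  have hg3 : (![y 0 ^ om n, y 3 ^ om n, 0, (y 0 * y 1 + y 2 * y 3) ^ 2 ^ n] : Fin 4 → F n)
      ∈ polarGens n y := by simp [polarGens]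
  have hg4 : (![y 2 ^ om n, y 1 ^ om n, (y 0 * y 1 + y 2 * y 3) ^ 2 ^ n, 0] : Fin 4 → F n)
      ∈ polarGens n y := by simp [polarGens]
  by_cases hc : (y 0 * y 1 + y 2 * y 3 : F n) = 0
  · have hCz : ((y 0 * y 1 + y 2 * y 3 : F n)) ^ 2 ^ n = 0 := by rw [hc]; exact zpn
    have hY : ∃ i, y i ≠ 0 := by
      by_contra hall; push_neg at hall; exact hy (funext fun i => hall i)
    rcases hY with ⟨i, hyi⟩
    fin_cases i
    · have hyo : (y 0 : F n) ^ om n ≠ 0 := pow_ne_zero _ (by simpa using hyi)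
      exact two_le_finrank_span hg1 hg3 0 2 (by simp) (by simpa using hyo) (by simpa using hyo)
    · have hyo : (y 1 : F n) ^ om n ≠ 0 := pow_ne_zero _ (by simpa using hyi)
      exact two_le_finrank_span hg2 hg4 1 3 (by simp) (by simpa using hyo) (by simpa using hyo)
    · have hyo : (y 2 : F n) ^ om n ≠ 0 := pow_ne_zero _ (by simpa using hyi)
      exact two_le_finrank_span hg1 hg4 0 3 (by simp) (by simpa using hyo) (by simpa using hyo)
    · have hyo : (y 3 : F n) ^ om n ≠ 0 := pow_ne_zero _ (by simpa using hyi)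
      exact two_le_finrank_span hg2 hg3 1 2 (by simp [hCz]) (by simpa using hyo) (by simpa using hyo)
  · have hC : ((y 0 * y 1 + y 2 * y 3 : F n)) ^ 2 ^ n ≠ 0 := pow_ne_zero _ hc
    exact two_le_finrank_span hg1 hg2 0 1 (by simp) (by simpa using hC) (by simpa using hC)

lemma exists_w {x y : Fin 4 → F n} (hx : x ≠ 0) (hy : y ≠ 0) :
    ∃ w, w ∈ polarSpan n y ∧ Blin n x w = 0 ∧ w ≠ 0 := by
  set S := polarSpan n y with hS
  set K := LinearMap.ker (Blin n x) with hK
  have h1 : 2 ≤ Module.finrank (F n) S := two_le_finrank_polarSpan hy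
  have h2 : 3 ≤ Module.finrank (F n) K := finrank_ker_Blin hx
  have h3 := Submodule.finrank_sup_add_finrank_inf_eq S K
  have h4 : Module.finrank (F n) ↥(S ⊔ K) ≤ 4 := by
    have := Submodule.finrank_le (S ⊔ K)
    simpa [Module.finrank_pi] using this
  have h5 : 1 ≤ Module.finrank (F n) ↥(S ⊓ K) := by omega
  have h6 : S ⊓ K ≠ ⊥ := by
    intro hb
    rw [hb] at h5
    simp [finrank_bot] at h5
  obtain ⟨w, hw, hw0⟩ := Submodule.exists_mem_ne_zero_of_ne_bot h6
  exact ⟨w, hw.1, LinearMap.mem_ker.1 hw.2, hw0⟩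

end AqPf
namespace AqPf
variable {n : ℕ}

lemma rep_smul (v : Fin 4 → F n) (hv : v ≠ 0) :
    ∃ a : F n, a ≠ 0 ∧ a • v = (Projectivization.mk (F n) v hv).rep := by
  obtain ⟨a, ha⟩ := Projectivization.exists_smul_eq_mk_rep (F n) v hv
  exact ⟨(a : F n), Units.ne_zero a, by simpa [Units.smul_def] using ha⟩

lemma eq_mk_imp {v w : Fin 4 → F n} (hv : v ≠ 0) (hw : w ≠ 0)
    (h : Projectivization.mk (F n) v hv = Projectivization.mk (F n) w hw) :
    ∃ a : F n, a ≠ 0 ∧ a • w = v := by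
  rw [Projectivization.mk_eq_mk_iff] at h
  obtain ⟨a, ha⟩ := h
  exact ⟨(a : F n), Units.ne_zero a, by simpa [Units.smul_def] using ha⟩

lemma eq_point_imp {P : PG3 n} {z : Fin 4 → F n} (hz : z ≠ 0)
    (h : P = Projectivization.mk (F n) z hz) :
    ∃ a : F n, a ≠ 0 ∧ a • z = P.rep := by
  have h2 : Projectivization.mk (F n) P.rep P.rep_nonzero = Projectivization.mk (F n) z hz := by
    rw [Projectivization.mk_rep]; exact h
  exact eq_mk_imp P.rep_nonzero hz h2

lemma adj_of_ee {P Q : PG3 n} (hne : P ≠ Q) (h : ee n P.rep Q.rep = 0) : (Aq n).Adj P Q :=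
  ⟨hne, mem_polarSpan_of_ee P.rep_nonzero h, mem_polarSpan_of_ee Q.rep_nonzero (ee_symm h)⟩

lemma adj_mk_right {P : PG3 n} {z : Fin 4 → F n} (hz : z ≠ 0)
    (hne : P ≠ Projectivization.mk (F n) z hz) (h : ee n P.rep z = 0) :
    (Aq n).Adj P (Projectivization.mk (F n) z hz) := by
  obtain ⟨b, hb0, hb⟩ := rep_smul z hz
  exact adj_of_ee hne (by rw [← hb]; exact ee_smul_right_zero h)

lemma adj_mk_left {Q : PG3 n} {w : Fin 4 → F n} (hw : w ≠ 0)
    (hne : Projectivization.mk (F n) w hw ≠ Q) (h : ee n w Q.rep = 0) :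
    (Aq n).Adj (Projectivization.mk (F n) w hw) Q := by
  obtain ⟨b, hb0, hb⟩ := rep_smul w hw
  exact adj_of_ee hne (by rw [← hb]; exact ee_smul_left_zero hb0 h)

lemma adj_mk_mk {v w : Fin 4 → F n} (hv : v ≠ 0) (hw : w ≠ 0)
    (hne : Projectivization.mk (F n) v hv ≠ Projectivization.mk (F n) w hw)
    (h : ee n v w = 0) :
    (Aq n).Adj (Projectivization.mk (F n) v hv) (Projectivization.mk (F n) w hw) := by
  obtain ⟨b, hb0, hb⟩ := rep_smul w hw
  exact adj_mk_left hv hne (by rw [← hb]; exact ee_smul_right_zero h)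

lemma ee_base {v : Fin 4 → F n} (hv : v ≠ 0) (R : PG3 n)
    (h : (Aq n).Adj (Projectivization.mk (F n) v hv) R) : ee n v R.rep = 0 := by
  have h0 : ee n ((Projectivization.mk (F n) v hv).rep) R.rep = 0 := ee_of_mem h.2.1
  obtain ⟨a, ha0, ha⟩ := rep_smul v hv
  rw [← ha, ee_smul_left_iff ha0] at h0
  exact h0

lemma edist_le_three (P Q : PG3 n) : (Aq n).edist P Q ≤ 3 := by
  by_cases hPQ : P = Q
  · subst hPQ; simp [SimpleGraph.edist_self]
  have hx : P.rep ≠ 0 := P.rep_nonzero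
  have hy : Q.rep ≠ 0 := Q.rep_nonzero
  set x := P.rep with hxdef
  set y := Q.rep with hydef
  by_cases hadj : ee n x y = 0
  · have hAdj : (Aq n).Adj P Q := adj_of_ee hPQ hadj
    refine le_trans (SimpleGraph.edist_le (SimpleGraph.Walk.cons hAdj SimpleGraph.Walk.nil)) ?_
    simp <;> norm_num
  · obtain ⟨w, hwS, hwB, hw0⟩ := exists_w hx hy
    have hB : x 0 * w 1 + x 1 * w 0 + x 2 * w 3 + x 3 * w 2 = 0 := by
      rw [← Blin_apply]; exact hwB
    have heyw : ee n y w = 0 := ee_of_mem hwS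
    have hewy : ee n w y = 0 := ee_symm heyw
    have hwx : ¬ ∃ t : F n, w = t • x := by
      rintro ⟨t, rfl⟩
      have ht : t ≠ 0 := by rintro rfl; simp at hw0
      have : ee n y x = 0 := by rwa [ee_smul_right_iff ht] at heyw
      exact hadj (ee_symm this)
    have hz0 : zf n x w ≠ 0 := fun h0 => hwx (dep_of_zf_eq_zero hx hB h0)
    set z := zf n x w with hzdef
    have hezx : ee n z x = 0 := ee_zf hB
    have hezw : ee n z w = 0 := by
      rw [hzdef, zf_comm]
      exact ee_zf (by linear_combination hB)
    have hexz : ee n x z = 0 := ee_symm hezx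
    set Pz := Projectivization.mk (F n) z hz0 with hPzdef
    set Pw := Projectivization.mk (F n) w hw0 with hPwdef
    by_cases h1 : P = Pz
    · obtain ⟨a, ha0, ha⟩ := eq_point_imp hz0 h1
      rw [← hxdef] at ha
      have hexw : ee n x w = 0 := by rw [← ha]; exact ee_smul_left_zero ha0 hezw
      by_cases h3 : Pw = Q
      · obtain ⟨b, hb0, hb⟩ := eq_point_imp hw0 h3.symm
        rw [← hydef] at hb
        exact absurd (by rw [← hb]; exact ee_smul_right_zero hexw) hadj
      by_cases h4 : P = Pw
      · obtain ⟨c, hc0, hc⟩ := eq_point_imp hw0 h4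
        rw [← hxdef] at hc
        exact absurd ⟨c⁻¹, by rw [← hc, smul_smul, inv_mul_cancel₀ hc0, one_smul]⟩ hwx
      have e1 : (Aq n).Adj P Pw := adj_mk_right hw0 h4 hexw
      have e2 : (Aq n).Adj Pw Q := adj_mk_left hw0 h3 hewy
      refine le_trans (SimpleGraph.edist_le
        (SimpleGraph.Walk.cons e1 (SimpleGraph.Walk.cons e2 SimpleGraph.Walk.nil))) ?_
      simp <;> norm_num
    · by_cases h2 : Pz = Pw
      · obtain ⟨a, ha0, ha⟩ := eq_mk_imp hz0 hw0 h2
        have heyz : ee n y z = 0 := by rw [← ha]; exact ee_smul_right_zero heyw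
        have hezy : ee n z y = 0 := ee_symm heyz
        by_cases h5 : Pz = Q
        · obtain ⟨b, hb0, hb⟩ := eq_point_imp hz0 h5.symm
          rw [← hydef] at hb
          exact absurd (by rw [← hb]; exact ee_smul_right_zero hexz) hadj
        have e1 : (Aq n).Adj P Pz := adj_mk_right hz0 h1 hexz
        have e2 : (Aq n).Adj Pz Q := adj_mk_left hz0 h5 hezy
        refine le_trans (SimpleGraph.edist_le
          (SimpleGraph.Walk.cons e1 (SimpleGraph.Walk.cons e2 SimpleGraph.Walk.nil))) ?_
        simp <;> norm_num
      · by_cases h3 : Pw = Q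
        · obtain ⟨b, hb0, hb⟩ := eq_point_imp hw0 h3.symm
          rw [← hydef] at hb
          have hezy : ee n z y = 0 := by rw [← hb]; exact ee_smul_right_zero hezw
          by_cases h5 : Pz = Q
          · obtain ⟨c, hc0, hc⟩ := eq_point_imp hz0 h5.symm
            rw [← hydef] at hc
            exact absurd (by rw [← hc]; exact ee_smul_right_zero hexz) hadj
          have e1 : (Aq n).Adj P Pz := adj_mk_right hz0 h1 hexz
          have e2 : (Aq n).Adj Pz Q := adj_mk_left hz0 h5 hezy
          refine le_trans (SimpleGraph.edist_le
            (SimpleGraph.Walk.cons e1 (SimpleGraph.Walk.cons e2 SimpleGraph.Walk.nil))) ?_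
          simp <;> norm_num
        · have e1 : (Aq n).Adj P Pz := adj_mk_right hz0 h1 hexz
          have e2 : (Aq n).Adj Pz Pw := adj_mk_mk hz0 hw0 h2 hezw
          have e3 : (Aq n).Adj Pw Q := adj_mk_left hw0 h3 hewy
          refine le_trans (SimpleGraph.edist_le (SimpleGraph.Walk.cons e1
            (SimpleGraph.Walk.cons e2 (SimpleGraph.Walk.cons e3 SimpleGraph.Walk.nil)))) ?_
          simp <;> norm_num

end AqPf
namespace AqPf
variable {n : ℕ}

lemma memP0_coords {u : Fin 4 → F n} (h : ee n ![1, 0, 0, 0] u = 0) :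
    u 1 = 0 ∧ u 3 = 0 := by
  have h1 := congrFun h 1
  have h3 := congrFun h 3
  simp only [ee, Matrix.cons_val_zero, Matrix.cons_val_one, Matrix.head_cons, Matrix.cons_val_two,
    Matrix.tail_cons, Matrix.cons_val_three, Pi.zero_apply, mul_zero, zero_mul, mul_one, one_mul,
    add_zero, zero_add, one_pow, zpn, zpo] at h1 h3
  exact ⟨h3, h1⟩

lemma memP1_coords {u : Fin 4 → F n} (h : ee n ![0, 1, 0, 0] u = 0) :
    u 0 = 0 ∧ u 2 = 0 := by
  have h0 := congrFun h 0
  have h2 := congrFun h 2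
  simp only [ee, Matrix.cons_val_zero, Matrix.cons_val_one, Matrix.head_cons, Matrix.cons_val_two,
    Matrix.tail_cons, Matrix.cons_val_three, Pi.zero_apply, mul_zero, zero_mul, mul_one, one_mul,
    add_zero, zero_add, one_pow, zpn, zpo] at h0 h2
  exact ⟨h2, h0⟩

end AqPf

theorem Aq_diameter_three (n : ℕ) (hn : 1 ≤ n) :
    (Aq n).Connected ∧ (Aq n).ediam = 3 := by
  classical
  have e0ne : (![1, 0, 0, 0] : Fin 4 → F n) ≠ 0 := vne _ 0 rfl
  have e1ne : (![0, 1, 0, 0] : Fin 4 → F n) ≠ 0 := vne _ 1 rfl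
  set P0 : PG3 n := Projectivization.mk (F n) ![1, 0, 0, 0] e0ne with hP0def
  set P1 : PG3 n := Projectivization.mk (F n) ![0, 1, 0, 0] e1ne with hP1def
  have hconn : (Aq n).Connected := by
    rw [SimpleGraph.connected_iff]
    refine ⟨fun u v => ?_, ⟨P0⟩⟩
    apply SimpleGraph.reachable_of_edist_ne_top
    intro htop
    have := AqPf.edist_le_three u v
    rw [htop] at this
    exact absurd this (by simp)
  refine ⟨hconn, le_antisymm (SimpleGraph.ediam_le_iff.2 fun u v => AqPf.edist_le_three u v) ?_⟩
  have hP01 : P0 ≠ P1 := by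
    intro h
    obtain ⟨a, ha0, ha⟩ := AqPf.eq_mk_imp e0ne e1ne h
    have := congrFun ha 0
    simp at this
  have hdist : 3 ≤ (Aq n).edist P0 P1 := by
    by_contra hlt
    push_neg at hlt
    have hne_top : (Aq n).edist P0 P1 ≠ ⊤ := by
      intro h; rw [h] at hlt; exact absurd hlt (by simp)
    obtain ⟨p, hp⟩ := SimpleGraph.exists_walk_of_edist_ne_top hne_top
    have hlen : p.length ≤ 2 := by
      have h3 : (p.length : ℕ∞) < 3 := by rw [hp]; exact hlt
      have h3' : p.length < 3 := by exact_mod_cast h3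
      omega
    rcases (by omega : p.length = 0 ∨ p.length = 1 ∨ p.length = 2) with hL | hL | hL
    · exact hP01 (SimpleGraph.Walk.eq_of_length_eq_zero hL)
    · have hAdj : (Aq n).Adj P0 P1 := by
        have hstep := p.adj_getVert_succ (i := 0) (by omega)
        rw [p.getVert_zero] at hstep
        have h2 := p.getVert_length
        rw [hL] at h2
        rwa [h2] at hstep
      have hee := AqPf.ee_base e0ne P1 hAdj
      obtain ⟨b, hb0, hb⟩ := AqPf.rep_smul _ e1ne
      have h1 := (AqPf.memP0_coords hee).1
      rw [hP1def] at h1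
      rw [← hb] at h1
      simp at h1
      exact hb0 h1
    · set R := p.getVert 1 with hRdef
      have hA : (Aq n).Adj P0 R := by
        have hstep := p.adj_getVert_succ (i := 0) (by omega)
        rwa [p.getVert_zero] at hstep
      have hB : (Aq n).Adj R P1 := by
        have hstep := p.adj_getVert_succ (i := 1) (by omega)
        have h2 := p.getVert_length
        rw [hL] at h2
        rwa [h2] at hstep
      have hA2 := AqPf.ee_base e0ne R hA
      have hB2 := AqPf.ee_base e1ne R hB.symm
      have h10 := AqPf.memP0_coords hA2
      have h20 := AqPf.memP1_coords hB2
      apply R.rep_nonzero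
      funext i
      fin_cases i
      · simpa using h20.1
      · simpa using h10.1
      · simpa using h20.2
      · simpa using h10.2
  exact le_trans hdist SimpleGraph.edist_le_ediam
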